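/- arXiv:1712.02589 — 2 statements merged into one kernel-verified Lean document; each statement's English description precedes it below -/
import Mathlib

section
/- Generalized extension theorem (finite-to-infinite direction for projective families of functionals): Let Λ be a set and for each finite Λ_k ⊆ Λ let T_{Λ_k}: ⊗_{α∈Λ_k}V_α → ℝ be bounded linear functionals satisfying T_{Λ_k}[ξ] = T_{Λ_ℓ}[ξ ⊗ (⊗_{α∈Λ_ℓ\Λ_k}I_α)] whenever Λ_k ⊆ Λ_ℓ. Then there exists a bounded linear functional T_Λ on the completion of the inductive-limit space L^♯_Λ such that T_Λ restricted to each finitely-supported element reproduces T_{Λ_k}: T_Λ[π⁻¹_{Λ_k}[ξ]] = T_{Λ_k}[ξ] for all finite Λ_k and ξ. -/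
/-- Generalized extension theorem (finite-to-infinite direction for projective families of
functionals).  In the inductive-limit setting — V s models ⊗_{α∈s}V_α for finite s ⊆ Λ,
π s t the partial inverse projections (tensoring with identity elements I_α), W the normed
ambient space and J s the compatible norm-defining trivial extensions — if the bounded
linear functionals T s satisfy the consistency condition T s = T t ∘ π s t and a uniform
bound |T s ξ| ≤ C‖J s ξ‖, then there exists a unique bounded linear functional T_Λ on the
topological closure of the span of the lifted elements L^♯_Λ reproducing every T s:
T_Λ[π⁻¹_{Λ_k}[ξ]] = T_{Λ_k}[ξ]. -/
theorem generalized_extension_theorem {Λ : Type*} (V : Finset Λ → Type*)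
    [∀ s, AddCommGroup (V s)] [∀ s, Module ℝ (V s)]
    {W : Type*} [NormedAddCommGroup W] [NormedSpace ℝ W]
    (π : ∀ s t : Finset Λ, s ⊆ t → (V s →ₗ[ℝ] V t))
    (J : ∀ s, V s →ₗ[ℝ] W)
    (hπcomp : ∀ (s t u : Finset Λ) (hst : s ⊆ t) (htu : t ⊆ u) (ξ : V s),
      π t u htu (π s t hst ξ) = π s u (hst.trans htu) ξ)
    (hJπ : ∀ (s t : Finset Λ) (h : s ⊆ t) (ξ : V s), J t (π s t h ξ) = J s ξ)
    (hJinj : ∀ s, Function.Injective (J s))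
    (T : ∀ s, V s →ₗ[ℝ] ℝ)
    (hcons : ∀ (s t : Finset Λ) (h : s ⊆ t) (ξ : V s), T s ξ = T t (π s t h ξ))
    (C : ℝ)
    (hbound : ∀ (s : Finset Λ) (ξ : V s), |T s ξ| ≤ C * ‖J s ξ‖) :
    ∃! TΛ : (Submodule.span ℝ {w : W | ∃ s ξ, J s ξ = w}).topologicalClosure →L[ℝ] ℝ,
      ∀ (s : Finset Λ) (ξ : V s),
        TΛ ⟨J s ξ, Submodule.le_topologicalClosure _
          (Submodule.subset_span ⟨s, ξ, rfl⟩)⟩ = T s ξ := by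
  classical
  set A : Set W := {w : W | ∃ s ξ, J s ξ = w} with hA
  set S : Submodule ℝ W := Submodule.span ℝ A with hS
  -- well-definedness: if two representatives give the same vector, the functionals agree
  have key : ∀ (s t : Finset Λ) (ξ : V s) (η : V t), J s ξ = J t η → T s ξ = T t η := by
    intro s t ξ η h
    have h1 : J (s ∪ t) (π s (s ∪ t) Finset.subset_union_left ξ)
        = J (s ∪ t) (π t (s ∪ t) Finset.subset_union_right η) := by
      rw [hJπ, hJπ, h]
    have h2 := hJinj (s ∪ t) h1
    rw [hcons s (s ∪ t) Finset.subset_union_left ξ,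
      hcons t (s ∪ t) Finset.subset_union_right η, h2]
  -- every element of the span is already of the form `J s ξ`
  have spanRep : ∀ w ∈ S, ∃ s ξ, J s ξ = w := by
    intro w hw
    induction hw using Submodule.span_induction with
    | mem x hx => exact hx
    | zero => exact ⟨∅, 0, map_zero _⟩
    | add x y _ _ hx hy =>
      obtain ⟨s, ξ, rfl⟩ := hx
      obtain ⟨t, η, rfl⟩ := hy
      refine ⟨s ∪ t, π s (s ∪ t) Finset.subset_union_left ξ
        + π t (s ∪ t) Finset.subset_union_right η, ?_⟩
      rw [map_add, hJπ, hJπ]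
    | smul a x _ hx =>
      obtain ⟨s, ξ, rfl⟩ := hx
      exact ⟨s, a • ξ, map_smul _ _ _⟩
  choose rs rξ hrep using fun (w : S) => spanRep w.1 w.2
  -- the linear functional on the span
  have addkey : ∀ (w₁ w₂ : S), T (rs (w₁ + w₂)) (rξ (w₁ + w₂))
      = T (rs w₁) (rξ w₁) + T (rs w₂) (rξ w₂) := by
    intro w₁ w₂
    set u := rs w₁ ∪ rs w₂ with hu
    have hJ : J (rs (w₁ + w₂)) (rξ (w₁ + w₂))
        = J u (π (rs w₁) u Finset.subset_union_left (rξ w₁)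
          + π (rs w₂) u Finset.subset_union_right (rξ w₂)) := by
      rw [map_add, hJπ, hJπ, hrep, hrep, hrep]
      rfl
    rw [key _ _ _ _ hJ, map_add, ← hcons, ← hcons]
  have smulkey : ∀ (a : ℝ) (w : S), T (rs (a • w)) (rξ (a • w)) = a * T (rs w) (rξ w) := by
    intro a w
    have hJ : J (rs (a • w)) (rξ (a • w)) = J (rs w) (a • rξ w) := by
      rw [map_smul, hrep, hrep]; rfl
    rw [key _ _ _ _ hJ, map_smul, smul_eq_mul]
  let g : S →ₗ[ℝ] ℝ :=
    { toFun := fun w => T (rs w) (rξ w)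
      map_add' := addkey
      map_smul' := smulkey }
  have gbound : ∀ w : S, ‖g w‖ ≤ C * ‖w‖ := by
    intro w
    have := hbound (rs w) (rξ w)
    rw [hrep w] at this
    simpa [g, Real.norm_eq_abs] using this
  let g' : S →L[ℝ] ℝ := LinearMap.mkContinuous g C gbound
  -- inclusion of the span into its closure
  let incl : S →ₗ[ℝ] S.topologicalClosure :=
    Submodule.inclusion (Submodule.le_topologicalClosure S)
  have hincl_norm : ∀ x : S, ‖incl x‖ = ‖x‖ := fun x => rfl
  let e : S →L[ℝ] S.topologicalClosure :=
    LinearMap.mkContinuous incl 1 (fun x => by rw [hincl_norm, one_mul])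
  have he_iso : Isometry e := AddMonoidHomClass.isometry_of_norm e hincl_norm
  have he_ui : IsUniformInducing e := he_iso.isUniformInducing
  have he_dense : DenseRange e := by
    intro y
    rw [mem_closure_iff_seq_limit] at *
    have hy : (y : W) ∈ closure (S : Set W) := by
      rw [← Submodule.topologicalClosure_coe]; exact y.2
    rw [mem_closure_iff_seq_limit] at hy
    obtain ⟨f, hf1, hf2⟩ := hy
    refine ⟨fun n => e ⟨f n, hf1 n⟩, fun n => ⟨⟨f n, hf1 n⟩, rfl⟩, ?_⟩
    exact Topology.IsEmbedding.subtypeVal.tendsto_nhds_iff.mpr hf2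
  refine ⟨g'.extend e, ?_, ?_⟩
  · intro s ξ
    have hmem : J s ξ ∈ S := Submodule.subset_span ⟨s, ξ, rfl⟩
    have h1 : (⟨J s ξ, Submodule.le_topologicalClosure _
        (Submodule.subset_span ⟨s, ξ, rfl⟩)⟩ : S.topologicalClosure)
        = e ⟨J s ξ, hmem⟩ := rfl
    rw [h1, ContinuousLinearMap.extend_eq (h_dense := he_dense) (h_e := he_ui)]
    exact key _ _ _ _ (hrep ⟨J s ξ, hmem⟩)
  · intro T' hT'
    symm
    apply ContinuousLinearMap.extend_unique (h_dense := he_dense) (h_e := he_ui)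
    ext w
    obtain ⟨s, ξ, hw⟩ := spanRep w.1 w.2
    have hw' : e w = ⟨J s ξ, Submodule.le_topologicalClosure _
        (Submodule.subset_span ⟨s, ξ, rfl⟩)⟩ := Subtype.ext hw.symm
    have : T (rs w) (rξ w) = T s ξ := key _ _ _ _ (by rw [hrep w, hw])
    simp only [ContinuousLinearMap.comp_apply, hw', hT' s ξ]
    exact this.symm
end

section
/- If a family of joint probability distributions {P_{Λ_k}} over finite time sets satisfies the Kolmogorov consistency condition (each P_{Λ_k} is the marginal of P_{Λ_ℓ} for Λ_k ⊆ Λ_ℓ), then the associated classical Choi matrices Υ^cl_{Λ_k} (defined as Σ P_{Λ_k}(i) ⊗_α (𝟙⊗|i_α⟩⟨i_α|)) satisfy the comb consistency condition: Υ^cl_{Λ_k} = tr_{Λ_ℓ\Λ_k}[(𝟙_{Λ_k} ⊗ (⊗_{α∈Λ_ℓ\Λ_k} Φ⁺_α)) Υ^cl_{Λ_ℓ}]. -/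
noncomputable section
open Matrix
open scoped Kronecker

/-- Tensor product of a family of matrices, realized entrywise on the function index type. -/
def tensorPow {ι : Type*} [Fintype ι] {β : Type*}
    (A : ι → Matrix β β ℂ) : Matrix (ι → β) (ι → β) ℂ :=
  fun r c => ∏ a, A a (r a) (c a)

/-- The unnormalized maximally entangled state Φ⁺ = Σᵢⱼ |ii⟩⟨jj| on ℂᵈ⊗ℂᵈ. -/
def PhiPlus (d : ℕ) : Matrix (Fin d × Fin d) (Fin d × Fin d) ℂ :=
  ∑ i, ∑ j, (Matrix.single i j (1 : ℂ)) ⊗ₖ (Matrix.single i j (1 : ℂ))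

/-- The classical Choi matrix Υ^cl = Σ_i P(i) ⊗_a (𝟙 ⊗ |i_a⟩⟨i_a|). -/
def clChoi {d : ℕ} {ι : Type*} [Fintype ι] [DecidableEq ι] (P : (ι → Fin d) → ℝ) :
    Matrix (ι → Fin d × Fin d) (ι → Fin d × Fin d) ℂ :=
  ∑ i : ι → Fin d, (P i : ℂ) •
    tensorPow (fun a => (1 : Matrix (Fin d) (Fin d) ℂ) ⊗ₖ Matrix.single (i a) (i a) (1 : ℂ))

/-- Merge an assignment on a finite subset s with one on its complement. -/
def merge {ι β : Type*} [DecidableEq ι] (s : Finset ι)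
    (r : {a // a ∈ s} → β) (f : {a // a ∉ s} → β) : ι → β :=
  fun a => if h : a ∈ s then r ⟨a, h⟩ else f ⟨a, h⟩

/-- Partial trace over the tensor factors corresponding to times outside s. -/
def ptr {ι β : Type*} [Fintype ι] [DecidableEq ι] [Fintype β] [DecidableEq β] (s : Finset ι)
    (M : Matrix (ι → β) (ι → β) ℂ) :
    Matrix ({a // a ∈ s} → β) ({a // a ∈ s} → β) ℂ :=
  fun r c => ∑ f : {a // a ∉ s} → β, M (merge s r f) (merge s c f)


lemma phiPlus_apply {d : ℕ} (x y : Fin d × Fin d) :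
    PhiPlus d x y = if x.1 = x.2 ∧ y.1 = y.2 then 1 else 0 := by
  rcases x with ⟨x1, x2⟩; rcases y with ⟨y1, y2⟩
  unfold PhiPlus
  simp only [Matrix.sum_apply, kroneckerMap_apply, Matrix.single, of_apply]
  by_cases h1 : x1 = x2
  · by_cases h2 : y1 = y2
    · subst h1; subst h2
      simp [ite_and, Finset.sum_ite_eq', Finset.sum_ite_eq]
    · simp only [h1, h2, and_false, if_false]
      apply Finset.sum_eq_zero; intro p _; apply Finset.sum_eq_zero; intro q _
      by_cases hp : p = x2 <;> by_cases hq : q = y1 <;> simp_all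
  · simp only [h1, false_and, if_false]
    apply Finset.sum_eq_zero; intro p _; apply Finset.sum_eq_zero; intro q _
    by_cases hp : p = x1 <;> by_cases hq : q = y1 <;> simp_all

lemma clChoi_apply {d : ℕ} {ι : Type*} [Fintype ι] [DecidableEq ι] (P : (ι → Fin d) → ℝ)
    (r c : ι → Fin d × Fin d) :
    clChoi P r c = if r = c then (P (fun a => (r a).2) : ℂ) else 0 := by
  unfold clChoi
  rw [Matrix.sum_apply]
  rw [Finset.sum_eq_single (fun a => (r a).2)]
  · simp only [Matrix.smul_apply, smul_eq_mul, kroneckerMap_apply, one_apply, Matrix.single,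
      of_apply, tensorPow]
    have : ∀ a : ι, ((if (r a).1 = (c a).1 then (1:ℂ) else 0) *
        (if True ∧ (r a).2 = (c a).2 then (1:ℂ) else 0)) =
        (if r a = c a then 1 else 0) := by
      intro a
      by_cases h1 : (r a).1 = (c a).1 <;> by_cases h2 : (r a).2 = (c a).2 <;>
        simp [h1, h2, Prod.ext_iff]
    simp only [this, Finset.prod_boole]
    by_cases h : r = c
    · simp [h]
    · have hne : ¬ ∀ a ∈ Finset.univ, r a = c a := by
        intro hh; exact h (funext fun a => hh a (Finset.mem_univ a))
      rw [if_neg hne, if_neg h, mul_zero]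
  · intro g _ hg
    obtain ⟨a, ha⟩ : ∃ a, g a ≠ (r a).2 := by
      by_contra h; push_neg at h; exact hg (funext h)
    simp only [Matrix.smul_apply, tensorPow]
    rw [Finset.prod_eq_zero (Finset.mem_univ a)]
    · simp
    · simp [kroneckerMap_apply, Matrix.single, of_apply, ha]
  · simp

lemma merge_snd {ι : Type*} [DecidableEq ι] {β γ : Type*} (s : Finset ι)
    (c : {a // a ∈ s} → β × γ) (f : {a // a ∉ s} → β × γ) :
    (fun a => (merge s c f a).2) = merge s (fun b => (c b).2) (fun b => (f b).2) := by
  funext a; unfold merge; by_cases h : a ∈ s <;> simp [h]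

lemma tp_merge {d : ℕ} {ι : Type*} [Fintype ι] [DecidableEq ι] (s : Finset ι)
    (r c : {a // a ∈ s} → Fin d × Fin d) (f : {a // a ∉ s} → Fin d × Fin d) :
    tensorPow (fun a => if a ∈ s then (1 : Matrix (Fin d × Fin d) (Fin d × Fin d) ℂ)
        else PhiPlus d) (merge s r f) (merge s c f)
      = if r = c ∧ ∀ b, (f b).1 = (f b).2 then 1 else 0 := by
  unfold tensorPow
  have hfac : ∀ a : ι,
      (if a ∈ s then (1 : Matrix (Fin d × Fin d) (Fin d × Fin d) ℂ) else PhiPlus d)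
        (merge s r f a) (merge s c f a)
      = if (if h : a ∈ s then r ⟨a, h⟩ = c ⟨a, h⟩
            else (f ⟨a, h⟩).1 = (f ⟨a, h⟩).2) then 1 else 0 := by
    intro a
    by_cases h : a ∈ s
    · rw [if_pos h]; unfold merge; rw [dif_pos h, dif_pos h, one_apply]; simp [h]
    · rw [if_neg h]; unfold merge; rw [dif_neg h, dif_neg h, phiPlus_apply]; simp [h]
  rw [Finset.prod_congr rfl (fun a _ => hfac a), Finset.prod_boole]
  have hiff : (∀ a ∈ Finset.univ, (if h : a ∈ s then r ⟨a, h⟩ = c ⟨a, h⟩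
      else (f ⟨a, h⟩).1 = (f ⟨a, h⟩).2)) ↔ (r = c ∧ ∀ b, (f b).1 = (f b).2) := by
    constructor
    · intro hall
      constructor
      · funext b
        have h1 := hall b.1 (Finset.mem_univ _)
        rwa [dif_pos b.2] at h1
      · intro b
        have h1 := hall b.1 (Finset.mem_univ _)
        rwa [dif_neg b.2] at h1
    · rintro ⟨hrc, hf⟩ a _
      by_cases h : a ∈ s
      · rw [dif_pos h]; exact congrFun hrc ⟨a, h⟩
      · rw [dif_neg h]; exact hf ⟨a, h⟩
  simp only [hiff]

lemma sum_diag {β : Type*} [Fintype β] [DecidableEq β] {d : ℕ} (G : (β → Fin d) → ℂ) :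
    ∑ f : β → Fin d × Fin d,
      (if ∀ b, (f b).1 = (f b).2 then (1 : ℂ) else 0) * G (fun b => (f b).2)
    = ∑ h : β → Fin d, G h := by
  rw [← Equiv.sum_comp (Equiv.arrowProdEquivProdArrow β (fun _ => Fin d) (fun _ => Fin d)).symm]
  simp only [Equiv.arrowProdEquivProdArrow, Equiv.coe_fn_symm_mk]
  rw [Fintype.sum_prod_type]
  have : ∀ u v : β → Fin d, ((if ∀ b : β, u b = v b then (1:ℂ) else 0)) =
      (if u = v then 1 else 0) := by
    intro u v; rw [if_congr funext_iff.symm rfl rfl]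
  rw [Finset.sum_comm]
  refine Finset.sum_congr rfl fun v _ => ?_
  rw [Finset.sum_eq_single v]
  · simp
  · intro u _ huv; exact mul_eq_zero_of_left (if_neg (fun h => huv (funext h))) _
  · simp

/-- If a family of joint probability distributions is Kolmogorov consistent (P_{Λ_k} is the
marginal of P_{Λ_ℓ} for Λ_k ⊆ Λ_ℓ), then the associated classical Choi matrices satisfy the
comb consistency condition: Υ^cl_{Λ_k} = tr_{Λ_ℓ\Λ_k}[(𝟙_{Λ_k} ⊗ (⊗_{α∉Λ_k}Φ⁺)) Υ^cl_{Λ_ℓ}]. -/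
theorem kolmogorov_consistency_implies_comb_consistency {d : ℕ} {ι : Type*}
    [Fintype ι] [DecidableEq ι] (s : Finset ι)
    (Pl : (ι → Fin d) → ℝ) (Pk : ({a // a ∈ s} → Fin d) → ℝ)
    (hmarg : ∀ g : {a // a ∈ s} → Fin d,
      Pk g = ∑ f : {a // a ∉ s} → Fin d, Pl (merge s g f)) :
    clChoi Pk =
      ptr s ((tensorPow fun a =>
          if a ∈ s then (1 : Matrix (Fin d × Fin d) (Fin d × Fin d) ℂ) else PhiPlus d) *
        clChoi Pl) := by
  ext r c
  rw [clChoi_apply]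
  unfold ptr
  simp only [Matrix.mul_apply, clChoi_apply, mul_ite, mul_zero]
  simp only [Finset.sum_ite_eq', Finset.mem_univ, if_true]
  simp only [tp_merge]
  by_cases h : r = c
  · subst h
    simp only [eq_self_iff_true, true_and, if_true]
    rw [hmarg]
    push_cast
    rw [← sum_diag (G := fun v => (Pl (merge s (fun b => (r b).2) v) : ℂ))]
    refine Finset.sum_congr rfl fun f _ => ?_
    rw [merge_snd]
  · simp only [h, false_and, if_false, zero_mul, Finset.sum_const_zero]
end
end
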